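/- Let Γ be a finite connected regular simple graph of valency d ≥ 3, let G ≤ Aut(Γ) with Γ (G,2)-arc-transitive, let v be a vertex, and let r be a prime dividing d. Let P be a normal r-subgroup of G_v containing every normal r-subgroup of G_v (i.e. P = O_r(G_v) is the largest normal r-subgroup of G_v). Then either P = 1, or there exists an integer e ≥ 1 such that d = r^e and P is elementary abelian, isomorphic to (Z/rZ)^e; moreover in the latter case the restriction homomorphism φ_v is injective on P and φ_v(P) is a normal subgroup of G_v^{Γ(v)}. -/

import Mathlib

open MulAction

set_option linter.unusedSectionVars false
namespace Stmt8

/-- The homomorphism `φ_v` from the vertex-stabilizer `G_v` to the permutation group of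
the neighborhood `Γ(v)`, given by restricting the action. -/
def localHom {V G : Type*} [Group G] [MulAction G V] (Γ : SimpleGraph V)
    (hadj : ∀ (g : G) ⦃a b : V⦄, Γ.Adj a b → Γ.Adj (g • a) (g • b)) (v : V) :
    stabilizer G v →* Equiv.Perm (Γ.neighborSet v) where
  toFun g := Equiv.Perm.subtypePerm (MulAction.toPerm (g : G)) (fun w => by
    have hgv : (g : G) • v = v := mem_stabilizer_iff.mp g.2
    simp only [SimpleGraph.mem_neighborSet, MulAction.toPerm_apply]
    constructor
    · intro hw
      have h1 := hadj ((g : G))⁻¹ hw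
      rw [inv_smul_smul] at h1
      have h2 : ((g : G))⁻¹ • v = v := inv_smul_eq_iff.mpr hgv.symm
      rwa [h2] at h1
    · intro hw
      have h1 := hadj (g : G) hw
      rwa [hgv] at h1)
  map_one' := by
    ext w
    simp [Equiv.Perm.subtypePerm_apply]
  map_mul' g₁ g₂ := by
    ext w
    simp [Equiv.Perm.subtypePerm_apply, mul_smul]
    rfl


section Aux

variable {V G : Type*} [Fintype V] [Group G] [MulAction G V]

/-- Pointwise stabilizer of the closed neighborhood of `w`. -/
def fixer (Γ : SimpleGraph V) (w : V) : Subgroup G where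
  carrier := {g : G | g • w = w ∧ ∀ x, Γ.Adj w x → g • x = x}
  one_mem' := by simp
  mul_mem' := by
    rintro a b ⟨ha1, ha2⟩ ⟨hb1, hb2⟩
    refine ⟨by rw [mul_smul, hb1, ha1], fun x hx => by rw [mul_smul, hb2 x hx, ha2 x hx]⟩
  inv_mem' := by
    rintro a ⟨ha1, ha2⟩
    refine ⟨by rw [← ha1, inv_smul_smul, ha1], fun x hx => ?_⟩
    conv_lhs => rw [← ha2 x hx]
    rw [inv_smul_smul]

lemma mem_fixer {Γ : SimpleGraph V} {w : V} {g : G} :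
    g ∈ fixer (G := G) Γ w ↔ g • w = w ∧ ∀ x, Γ.Adj w x → g • x = x := Iff.rfl

lemma fixer_le_stabilizer (Γ : SimpleGraph V) (w : V) :
    fixer (G := G) Γ w ≤ stabilizer G w := fun _ hg => hg.1

/-- Conjugate of a subgroup. -/
def cnj (g : G) (H : Subgroup G) : Subgroup G := H.map (MulAut.conj g).toMonoidHom

lemma mem_cnj {g x : G} {H : Subgroup G} : x ∈ cnj g H ↔ g⁻¹ * x * g ∈ H := by
  rw [cnj, Subgroup.mem_map_equiv]
  simp [MulAut.conj]

lemma cnj_cnj (g h : G) (H : Subgroup G) : cnj g (cnj h H) = cnj (g * h) H := by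
  ext x
  simp [mem_cnj, mul_inv_rev, mul_assoc]

lemma cnj_one (H : Subgroup G) : cnj (1 : G) H = H := by
  ext x; simp [mem_cnj]

lemma cnj_mono {g : G} {H K : Subgroup G} (h : H ≤ K) : cnj g H ≤ cnj g K :=
  Subgroup.map_mono h

lemma cnj_inf (g : G) (H K : Subgroup G) : cnj g (H ⊓ K) = cnj g H ⊓ cnj g K := by
  ext x; simp [mem_cnj, Subgroup.mem_inf]

lemma cnj_self_mem {g : G} {H : Subgroup G} {x : G} (hx : x ∈ H) : g * x * g⁻¹ ∈ cnj g H := by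
  rw [mem_cnj]; convert hx using 1; group

lemma card_cnj (g : G) (H : Subgroup G) : Nat.card (cnj g H) = Nat.card H :=
  (Nat.card_congr (H.equivMapOfInjective _ (MulAut.conj g).injective).toEquiv).symm

lemma cnj_stabilizer (g : G) (w : V) :
    cnj g (stabilizer G w) = stabilizer G (g • w) := by
  rw [stabilizer_smul_eq_stabilizer_map_conj]; rfl

lemma cnj_fixer (Γ : SimpleGraph V)
    (hadj : ∀ (g : G) ⦃a b : V⦄, Γ.Adj a b → Γ.Adj (g • a) (g • b))
    (g : G) (w : V) : cnj g (fixer (G := G) Γ w) = fixer Γ (g • w) := by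
  have key : ∀ (h : G) (u : V), ∀ x ∈ fixer (G := G) Γ u, h * x * h⁻¹ ∈ fixer Γ (h • u) := by
    intro h u x hx
    refine ⟨?_, fun z hz => ?_⟩
    · rw [mul_smul, mul_smul, inv_smul_smul, hx.1]
    · have hz' : Γ.Adj u (h⁻¹ • z) := by
        have := hadj h⁻¹ hz
        rwa [inv_smul_smul] at this
      rw [mul_smul, mul_smul, hx.2 _ hz', smul_inv_smul]
  ext x
  constructor
  · intro hx
    rw [mem_cnj] at hx
    have := key g w _ hx
    convert this using 1; group
  · intro hx
    rw [mem_cnj]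
    have := key g⁻¹ (g • w) _ hx
    rw [inv_smul_smul] at this
    simpa using this

end Aux

section Aux2

variable {V G : Type*} [Fintype V] [Group G] [MulAction G V]

/-- The key counting lemma: an `r`-subgroup `Q` fixing the arc `(u,c)` and normalized by the
stabilizer of the arc must fix all neighbours of `u`, since `r ∤ d - 1`. -/
lemma fix_nbrs (Γ : SimpleGraph V) {r d : ℕ} (hr : r.Prime) (hrd : r ∣ d) (hd : 3 ≤ d)
    (hreg : ∀ w : V, (Γ.neighborSet w).ncard = d)
    (hadj : ∀ (g : G) ⦃a b : V⦄, Γ.Adj a b → Γ.Adj (g • a) (g • b))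
    (h2arc : ∀ ⦃v0 v1 v2 w0 w1 w2 : V⦄, Γ.Adj v0 v1 → Γ.Adj v1 v2 → v0 ≠ v2 →
      Γ.Adj w0 w1 → Γ.Adj w1 w2 → w0 ≠ w2 →
        ∃ g : G, g • v0 = w0 ∧ g • v1 = w1 ∧ g • v2 = w2)
    (Q : Subgroup G) (hQ : IsPGroup r Q) (u c : V) (hc : Γ.Adj u c)
    (hfu : ∀ q ∈ Q, q • u = u) (hfc : ∀ q ∈ Q, q • c = c)
    (hnorm : ∀ s : G, s • u = u → s • c = c → ∀ q ∈ Q, s * q * s⁻¹ ∈ Q) :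
    ∀ x, Γ.Adj u x → ∀ q ∈ Q, q • x = x := by
  classical
  set Ω : Set V := Γ.neighborSet u \ {c} with hΩ
  have hmem : ∀ (q : Q) (x : Ω), (q : G) • (x : V) ∈ Ω := by
    rintro q ⟨x, hx1, hx2⟩
    constructor
    · have := hadj (q : G) hx1
      rwa [hfu q q.2] at this
    · simp only [Set.mem_singleton_iff] at hx2 ⊢
      intro hqx
      apply hx2
      have : ((q : G))⁻¹ • ((q : G) • x) = ((q : G))⁻¹ • c := by rw [hqx]
      rw [inv_smul_smul] at this
      rw [this]
      have := hfc _ (Q.inv_mem q.2)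
      exact this
  letI : SMul Q Ω := ⟨fun q x => ⟨(q : G) • (x : V), hmem q x⟩⟩
  have smul_def : ∀ (q : Q) (x : Ω), ((q • x : Ω) : V) = (q : G) • (x : V) := fun _ _ => rfl
  letI : MulAction Q Ω :=
    { one_smul := fun x => Subtype.ext (by rw [smul_def]; exact one_smul G (x : V))
      mul_smul := fun q₁ q₂ x => Subtype.ext (by
        rw [smul_def, smul_def, smul_def]
        exact mul_smul (q₁ : G) (q₂ : G) (x : V)) }
  haveI := Fact.mk hr
  have hcard : Nat.card Ω = d - 1 := by
    rw [Nat.card_coe_set_eq]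
    rw [Set.ncard_diff_singleton_of_mem (by simpa using hc)]
    rw [hreg u]
  have hnd : ¬ r ∣ Nat.card Ω := by
    rw [hcard]
    intro hdvd
    have h1 : r ∣ 1 := by
      have := Nat.dvd_sub hrd hdvd
      rwa [Nat.sub_sub_self (by omega)] at this
    exact hr.one_lt.ne' (Nat.dvd_one.mp h1)
  obtain ⟨x₀, hx₀⟩ := hQ.nonempty_fixed_point_of_prime_not_dvd_card Ω hnd
  have hx₀fix : ∀ q ∈ Q, q • (x₀ : V) = (x₀ : V) := by
    intro q hq
    have := hx₀ (⟨q, hq⟩ : Q)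
    exact congrArg Subtype.val this
  intro x hx q hq
  by_cases hxc : x = c
  · rw [hxc]; exact hfc q hq
  · obtain ⟨s, hs1, hs2, hs3⟩ :=
      h2arc hc.symm x₀.2.1 (fun h => x₀.2.2 (by simp [← h])) hc.symm hx
        (fun h => hxc h.symm)
    -- s • c = c, s • u = u, s • x₀ = x
    have hsinv_u : s⁻¹ • u = u := by rw [← hs2, inv_smul_smul, hs2]
    have hsinv_c : s⁻¹ • c = c := by rw [← hs1, inv_smul_smul, hs1]
    have hq' : s⁻¹ * q * s ∈ Q := by
      have := hnorm s⁻¹ hsinv_u hsinv_c q hq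
      rwa [inv_inv] at this
    calc q • x = q • (s • (x₀ : V)) := by rw [hs3]
    _ = s • ((s⁻¹ * q * s) • (x₀ : V)) := by
        rw [mul_smul, mul_smul, smul_inv_smul]
    _ = s • (x₀ : V) := by rw [hx₀fix _ hq']
    _ = x := hs3

end Aux2

section Aux3

variable {V G : Type*} [Fintype V] [Group G] [MulAction G V]

lemma R_trivial (Γ : SimpleGraph V) {r d : ℕ} (hr : r.Prime) (hrd : r ∣ d) (hd : 3 ≤ d)
    (hreg : ∀ w : V, (Γ.neighborSet w).ncard = d)
    (hconn : Γ.Connected)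
    (hadj : ∀ (g : G) ⦃a b : V⦄, Γ.Adj a b → Γ.Adj (g • a) (g • b))
    (hfaith : ∀ g : G, (∀ x : V, g • x = x) → g = 1)
    (h2arc : ∀ ⦃v0 v1 v2 w0 w1 w2 : V⦄, Γ.Adj v0 v1 → Γ.Adj v1 v2 → v0 ≠ v2 →
      Γ.Adj w0 w1 → Γ.Adj w1 w2 → w0 ≠ w2 →
        ∃ g : G, g • v0 = w0 ∧ g • v1 = w1 ∧ g • v2 = w2)
    (v : V) (P' : Subgroup G) (hP'le : P' ≤ stabilizer G v) (hP'r : IsPGroup r P')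
    (hP'norm : ∀ s ∈ stabilizer G v, ∀ p ∈ P', s * p * s⁻¹ ∈ P')
    (hP'max : ∀ Q : Subgroup G, Q ≤ stabilizer G v → IsPGroup r Q →
      (∀ s ∈ stabilizer G v, ∀ q ∈ Q, s * q * s⁻¹ ∈ Q) → Q ≤ P') :
    P' ⊓ fixer Γ v = ⊥ := by
  classical
  haveI : Finite G := by
    refine Finite.of_injective (MulAction.toPermHom G V) (fun g h hgh => ?_)
    have hxx : ∀ x : V, (h⁻¹ * g) • x = x := by
      intro x
      have : g • x = h • x := by
        have := congrArg (fun (p : Equiv.Perm V) => p x) hgh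
        simpa using this
      rw [mul_smul, this, inv_smul_smul]
    have h1 := hfaith _ hxx
    rw [mul_eq_one_iff_eq_inv] at h1
    exact inv_injective (h1.symm)
  set R : Subgroup G := P' ⊓ fixer Γ v with hRdef
  have hRr : IsPGroup r R := hP'r.to_le inf_le_left
  have hRnorm_v : ∀ s ∈ stabilizer G v, ∀ x ∈ R, s * x * s⁻¹ ∈ R := by
    intro s hs x hx
    refine Subgroup.mem_inf.mpr ⟨hP'norm s hs x hx.1, ?_⟩
    have h1 : s * x * s⁻¹ ∈ cnj s (fixer Γ v) := cnj_self_mem hx.2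
    rwa [cnj_fixer Γ hadj, mem_stabilizer_iff.mp hs] at h1
  set good : V → Prop := fun w => ∃ g : G, g • v = w ∧ cnj g R = R with hgood
  have hfix_of_good : ∀ w, good w → R ≤ fixer Γ w := by
    rintro w ⟨g, hgv, hgR⟩
    calc R = cnj g R := hgR.symm
    _ ≤ cnj g (fixer Γ v) := cnj_mono inf_le_right
    _ = fixer Γ w := by rw [cnj_fixer Γ hadj, hgv]
  have hnorm_of_good : ∀ w, good w → ∀ s ∈ stabilizer G w, ∀ x ∈ R, s * x * s⁻¹ ∈ R := by
    rintro w ⟨g, hgv, hgR⟩ s hs x hx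
    have hs' : g⁻¹ * s * g ∈ stabilizer G v := by
      have : s ∈ cnj g (stabilizer G v) := by rw [cnj_stabilizer, hgv]; exact hs
      exact mem_cnj.mp this
    have hx' : g⁻¹ * x * g ∈ R := by rw [← hgR] at hx; exact mem_cnj.mp hx
    have h1 := hRnorm_v _ hs' _ hx'
    have h2 := cnj_self_mem (g := g) h1
    rw [hgR] at h2
    have heq : g * (g⁻¹ * s * g * (g⁻¹ * x * g) * (g⁻¹ * s * g)⁻¹) * g⁻¹ = s * x * s⁻¹ := by
      group
    rwa [heq] at h2
  have step : ∀ w u, Γ.Adj w u → good w → good u := by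
    intro w u hwu hw
    have hRfixw := hfix_of_good w hw
    have hRnormw := hnorm_of_good w hw
    have hRfix_u : R ≤ fixer Γ u := by
      have key := fix_nbrs Γ hr hrd hd hreg hadj h2arc R hRr u w hwu.symm
        (fun q hq => (hRfixw hq).2 u hwu)
        (fun q hq => (hRfixw hq).1)
        (fun s hsu hsw q hq => hRnormw s (mem_stabilizer_iff.mpr hsw) q hq)
      intro x hx
      exact ⟨(hRfixw hx).2 u hwu, fun z hz => key z hz x hx⟩
    -- choose g₁ mapping v to u
    obtain ⟨b, hb, b2, hb2, hbne⟩ : ∃ b ∈ Γ.neighborSet v, ∃ b2 ∈ Γ.neighborSet v, b ≠ b2 := by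
      rw [← Set.one_lt_ncard (Set.toFinite _), hreg v]; omega
    obtain ⟨c', hc'⟩ : (Γ.neighborSet u \ {w}).Nonempty := by
      apply Set.nonempty_of_ncard_ne_zero
      rw [Set.ncard_diff_singleton_of_mem (by simpa using hwu.symm), hreg u]
      omega
    have hb' : Γ.Adj v b := hb
    have hb2' : Γ.Adj v b2 := hb2
    have hc1' : Γ.Adj u c' := hc'.1
    have hwc' : w ≠ c' := by
      intro h
      exact hc'.2 (by simp [← h])
    obtain ⟨g₁, hg₁b, hg₁v, hg₁b2⟩ := h2arc hb'.symm hb2' hbne hwu hc1' hwc'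
    have hfix_u_eq : fixer Γ u = cnj g₁ (fixer Γ v) := by rw [cnj_fixer Γ hadj, hg₁v]
    obtain ⟨S⟩ : Nonempty (Sylow r ↥(fixer (G := G) Γ u)) := inferInstance
    set S' : Subgroup G := S.toSubgroup.map (fixer Γ u).subtype with hS'
    have hS'le : S' ≤ fixer Γ u := by rintro x ⟨y, _, rfl⟩; exact y.2
    have hS'p : IsPGroup r S' := S.isPGroup'.map _
    have hconjle : ∀ s : G, s ∈ stabilizer G u → cnj s R ≤ S' := by
      intro s hs
      have h1 : cnj s R ≤ fixer Γ u := by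
        calc cnj s R ≤ cnj s (fixer Γ u) := cnj_mono hRfix_u
        _ = fixer Γ (s • u) := cnj_fixer Γ hadj s u
        _ = fixer Γ u := by rw [mem_stabilizer_iff.mp hs]
      have h2 : ∀ n ∈ fixer Γ u, ∀ x ∈ cnj s R, n * x * n⁻¹ ∈ cnj s R := by
        intro n hn x hx
        rw [mem_cnj] at hx ⊢
        have hns : s⁻¹ * n * s ∈ fixer Γ u := by
          have h3 : s⁻¹ * n * (s⁻¹)⁻¹ ∈ cnj s⁻¹ (fixer Γ u) := cnj_self_mem hn
          rw [inv_inv] at h3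
          rwa [cnj_fixer Γ hadj, inv_smul_eq_iff.mpr (mem_stabilizer_iff.mp hs).symm]
            at h3
        have hnw : (s⁻¹ * n * s) ∈ stabilizer G w :=
          mem_stabilizer_iff.mpr (hns.2 w hwu.symm)
        have h4 := hRnormw _ hnw _ hx
        have heq : s⁻¹ * n * s * (s⁻¹ * x * s) * (s⁻¹ * n * s)⁻¹
            = s⁻¹ * (n * x * n⁻¹) * s := by group
        rwa [heq] at h4
      set C : Subgroup ↥(fixer (G := G) Γ u) := (cnj s R).subgroupOf (fixer Γ u) with hC
      have hCnormal : C.Normal := by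
        constructor
        intro a ha n
        rw [Subgroup.mem_subgroupOf] at ha ⊢
        exact h2 n n.2 _ ha
      have hCp : IsPGroup r C := (hRr.map _).comap_subtype
      haveI := hCnormal
      have hCS : C ≤ S.toSubgroup := by
        have hsup : IsPGroup r (C ⊔ S.toSubgroup : Subgroup ↥(fixer (G := G) Γ u)) :=
          IsPGroup.to_sup_of_normal_left hCp S.isPGroup'
        have hmax := S.is_maximal' hsup le_sup_right
        rw [← hmax]
        exact le_sup_left
      intro x hx
      have hxfix : x ∈ fixer Γ u := h1 hx
      have hmem : (⟨x, hxfix⟩ : ↥(fixer (G := G) Γ u)) ∈ C := by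
        rw [Subgroup.mem_subgroupOf]; exact hx
      exact ⟨⟨x, hxfix⟩, hCS hmem, rfl⟩
    set T : Subgroup G := ⨆ s : ↥(stabilizer G u), cnj (s : G) R with hT
    have hTle : T ≤ S' := iSup_le fun s => hconjle s s.2
    have hTp : IsPGroup r T := hS'p.to_le hTle
    have hRT : R ≤ T := by
      have h5 := le_iSup (fun s : ↥(stabilizer G u) => cnj (s : G) R)
        ⟨1, one_mem _⟩
      rwa [show ((⟨1, one_mem _⟩ : ↥(stabilizer G u)) : G) = 1 from rfl, cnj_one] at h5
    have hTnorm : ∀ t ∈ stabilizer G u, ∀ x ∈ T, t * x * t⁻¹ ∈ T := by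
      intro t ht x hx
      have hle : cnj t T ≤ T := by
        rw [hT]
        show Subgroup.map _ _ ≤ _
        rw [Subgroup.map_iSup]
        apply iSup_le
        intro s
        have heq2 : (cnj (s : G) R).map (MulAut.conj t).toMonoidHom = cnj (t * s) R := by
          show cnj t (cnj (s : G) R) = _
          rw [cnj_cnj]
        rw [heq2]
        exact le_iSup (fun s : ↥(stabilizer G u) => cnj (s : G) R) ⟨t * s, mul_mem ht s.2⟩
      exact hle (cnj_self_mem hx)
    have hTstab : T ≤ stabilizer G u :=
      le_trans hTle (le_trans hS'le (fixer_le_stabilizer Γ u))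
    have hTP1 : T ≤ cnj g₁ P' := by
      have h1 : cnj g₁⁻¹ T ≤ stabilizer G v := by
        calc cnj g₁⁻¹ T ≤ cnj g₁⁻¹ (stabilizer G u) := cnj_mono hTstab
        _ = stabilizer G v := by rw [cnj_stabilizer, ← hg₁v, inv_smul_smul]
      have h2 : IsPGroup r (cnj g₁⁻¹ T) := hTp.map _
      have h3 : ∀ s ∈ stabilizer G v, ∀ q ∈ cnj g₁⁻¹ T, s * q * s⁻¹ ∈ cnj g₁⁻¹ T := by
        intro s hs q hq
        rw [mem_cnj, inv_inv] at hq ⊢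
        have hs' : g₁ * s * g₁⁻¹ ∈ stabilizer G u := by
          rw [mem_stabilizer_iff, ← hg₁v]
          rw [mul_smul, mul_smul, inv_smul_smul, mem_stabilizer_iff.mp hs]
        have h4 := hTnorm _ hs' _ hq
        have heq3 : g₁ * s * g₁⁻¹ * (g₁ * q * g₁⁻¹) * (g₁ * s * g₁⁻¹)⁻¹
            = g₁ * (s * q * s⁻¹) * g₁⁻¹ := by group
        rwa [heq3] at h4
      have h4 := hP'max _ h1 h2 h3
      calc T = cnj g₁ (cnj g₁⁻¹ T) := by rw [cnj_cnj, mul_inv_cancel, cnj_one]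
      _ ≤ cnj g₁ P' := cnj_mono h4
    have hfinal : R ≤ cnj g₁ R := by
      have h6 : R ≤ cnj g₁ P' ⊓ cnj g₁ (fixer Γ v) :=
        le_inf (le_trans hRT hTP1) (by rw [← hfix_u_eq]; exact hRfix_u)
      rwa [← cnj_inf] at h6
    have heqR : R = cnj g₁ R :=
      Subgroup.eq_of_le_of_card_ge hfinal (le_of_eq (card_cnj g₁ R))
    exact ⟨g₁, hg₁v, heqR.symm⟩
  have walkgood : ∀ (a b : V), Γ.Walk a b → good a → good b := by
    intro a b p
    induction p with
    | nil => exact id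
    | cons h p ih => exact fun ha => ih (step _ _ h ha)
  have allgood : ∀ w, good w := fun w =>
    walkgood v w (hconn.preconnected v w).some ⟨1, one_smul G v, cnj_one R⟩
  rw [eq_bot_iff]
  intro x hx
  rw [Subgroup.mem_bot]
  exact hfaith x fun w => ((hfix_of_good w (allgood w)) hx).1

end Aux3

section AuxIso

/-- A finite commutative group of exponent `r` (prime) and order `r ^ e` is elementary abelian. -/
lemma iso_of_elem_abelian {H : Type*} [Group H] [Finite H] {r e : ℕ} (hr : r.Prime)
    (hcard : Nat.card H = r ^ e) (hexp : ∀ x : H, x ^ r = 1)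
    (hcomm : ∀ a b : H, a * b = b * a) :
    Nonempty (H ≃* (Fin e → Multiplicative (ZMod r))) := by
  haveI := Fact.mk hr
  haveI : NeZero r := ⟨hr.pos.ne'⟩
  letI : CommGroup H := { ‹Group H› with mul_comm := hcomm }
  have hsm : ∀ x : Additive H, r • x = 0 := by
    intro x
    have h0 : (r • x).toMul = ((0 : Additive H)).toMul := by
      rw [toMul_nsmul, toMul_zero]
      exact hexp x.toMul
    exact Additive.toMul.injective h0
  letI iM : Module (ZMod r) (Additive H) := AddCommGroup.zmodModule hsm
  haveI : Finite (Additive H) := Finite.of_equiv H Additive.ofMul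
  haveI iF : Module.Finite (ZMod r) (Additive H) :=
    Module.Finite.of_finite (R := ZMod r) (M := Additive H)
  haveI iFr : Module.Free (ZMod r) (Additive H) :=
    Module.Free.of_divisionRing (ZMod r) (Additive H)
  set n := Module.finrank (ZMod r) (Additive H) with hn
  have b := @Module.finBasis (ZMod r) (Additive H) _ _ iM iFr _ iF
  have lequiv : Additive H ≃ₗ[ZMod r] (Fin n → ZMod r) := b.equivFun
  have h2 : Nat.card (Fin n → ZMod r) = r ^ n := by
    simp [Nat.card_eq_fintype_card, ZMod.card]
  have hcard2 : r ^ n = r ^ e := by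
    calc r ^ n = Nat.card (Fin n → ZMod r) := h2.symm
    _ = Nat.card (Additive H) := (Nat.card_congr lequiv.toEquiv).symm
    _ = Nat.card H := Nat.card_congr Additive.toMul
    _ = r ^ e := hcard
  have hne : n = e := Nat.pow_right_injective hr.two_le hcard2
  have e2 : Multiplicative (Additive H) ≃* Multiplicative (Fin n → ZMod r) :=
    AddEquiv.toMultiplicative lequiv.toAddEquiv
  have e3 : Multiplicative (Fin n → ZMod r) ≃* (Fin n → Multiplicative (ZMod r)) :=
    MulEquiv.funMultiplicative (Fin n) (ZMod r)
  refine ⟨((MulEquiv.multiplicativeAdditive H).symm.trans (e2.trans e3)).trans ?_⟩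
  rw [hne]

end AuxIso

/-- Let `Γ` be a finite connected regular graph of valency `d ≥ 3`,
`G ≤ Aut Γ` with `Γ` `(G,2)`-arc-transitive, `v` a vertex and `r` a prime dividing `d`.
Let `P = O_r(G_v)` be the largest normal `r`-subgroup of `G_v`. Then either `P = 1`, or
`d = r^e` and `P ≅ (ℤ/rℤ)^e` for some `e ≥ 1`; moreover in the latter case `φ_v` is
injective on `P` and `φ_v(P)` is normal in `G_v^{Γ(v)}`. -/
theorem stmt_8 {V G : Type*} [Fintype V] [Group G] [MulAction G V]
    (Γ : SimpleGraph V) (d : ℕ) (hd : 3 ≤ d)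
    (hreg : ∀ w : V, (Γ.neighborSet w).ncard = d)
    (hconn : Γ.Connected)
    (hadj : ∀ (g : G) ⦃a b : V⦄, Γ.Adj a b → Γ.Adj (g • a) (g • b))
    (hfaith : ∀ g : G, (∀ x : V, g • x = x) → g = 1)
    (h2arc : ∀ ⦃v0 v1 v2 w0 w1 w2 : V⦄, Γ.Adj v0 v1 → Γ.Adj v1 v2 → v0 ≠ v2 →
      Γ.Adj w0 w1 → Γ.Adj w1 w2 → w0 ≠ w2 →
        ∃ g : G, g • v0 = w0 ∧ g • v1 = w1 ∧ g • v2 = w2)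
    (v : V) (r : ℕ) (hr : r.Prime) (hrd : r ∣ d)
    (P : Subgroup (stabilizer G v)) (hPnormal : P.Normal) (hPr : IsPGroup r P)
    (hPmax : ∀ Q : Subgroup (stabilizer G v), Q.Normal → IsPGroup r Q → Q ≤ P) :
    P = ⊥ ∨
      ∃ e : ℕ, 1 ≤ e ∧ d = r ^ e ∧
        Nonempty (P ≃* (Fin e → Multiplicative (ZMod r))) ∧
        Function.Injective
          (fun x : P => localHom Γ hadj v (x : stabilizer G v)) ∧
        ((Subgroup.map (localHom Γ hadj v) P).subgroupOf
          (Subgroup.map (localHom Γ hadj v) (⊤ : Subgroup (stabilizer G v)))).Normal := by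
  classical
  haveI := Fact.mk hr
  haveI : Finite G := by
    refine Finite.of_injective (MulAction.toPermHom G V) (fun g h hgh => ?_)
    have hxx : ∀ x : V, (h⁻¹ * g) • x = x := by
      intro x
      have h9 : g • x = h • x := by
        have := congrArg (fun (p : Equiv.Perm V) => p x) hgh
        simpa using this
      rw [mul_smul, h9, inv_smul_smul]
    have h1 := hfaith _ hxx
    rw [mul_eq_one_iff_eq_inv] at h1
    exact inv_injective (h1.symm)
  set φ := localHom Γ hadj v with hφ
  set P' : Subgroup G := P.map (stabilizer G v).subtype with hP'def
  have hP'le : P' ≤ stabilizer G v := by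
    rintro x ⟨y, -, rfl⟩
    exact y.2
  have hP'r : IsPGroup r P' := hPr.map _
  have hP'norm : ∀ s ∈ stabilizer G v, ∀ p ∈ P', s * p * s⁻¹ ∈ P' := by
    rintro s hs p ⟨p₀, hp₀, rfl⟩
    exact ⟨(⟨s, hs⟩ : stabilizer G v) * p₀ * (⟨s, hs⟩ : stabilizer G v)⁻¹,
      hPnormal.conj_mem p₀ hp₀ ⟨s, hs⟩, rfl⟩
  have hP'max : ∀ Q : Subgroup G, Q ≤ stabilizer G v → IsPGroup r Q →
      (∀ s ∈ stabilizer G v, ∀ q ∈ Q, s * q * s⁻¹ ∈ Q) → Q ≤ P' := by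
    intro Q hQle hQr hQnorm
    have hQ₀norm : (Q.subgroupOf (stabilizer G v)).Normal := by
      constructor
      intro a ha g
      rw [Subgroup.mem_subgroupOf] at ha ⊢
      exact hQnorm g g.2 a ha
    have hQ₀r : IsPGroup r (Q.subgroupOf (stabilizer G v)) := hQr.comap_subtype
    have hle := hPmax _ hQ₀norm hQ₀r
    intro x hx
    exact ⟨⟨x, hQle hx⟩, hle (by rw [Subgroup.mem_subgroupOf]; exact hx), rfl⟩
  have hRbot : P' ⊓ fixer Γ v = ⊥ :=
    R_trivial Γ hr hrd hd hreg hconn hadj hfaith h2arc v P' hP'le hP'r hP'norm hP'max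
  -- elements of `P` killed by `φ` are trivial
  have hker : ∀ x : stabilizer G v, x ∈ P → φ x = 1 → x = 1 := by
    intro x hxP hx1
    have hfix : ∀ z, Γ.Adj v z → (x : G) • z = z := by
      intro z hz
      have hz' : z ∈ Γ.neighborSet v := hz
      have h2 := congrArg (fun (p : Equiv.Perm (Γ.neighborSet v)) => (p ⟨z, hz'⟩ : V)) hx1
      simpa [hφ, localHom] using h2
    have hmem : (x : G) ∈ P' ⊓ fixer Γ v :=
      ⟨⟨x, hxP, rfl⟩, mem_stabilizer_iff.mp x.2, hfix⟩
    rw [hRbot, Subgroup.mem_bot] at hmem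
    exact Subtype.ext hmem
  have hinj : Function.Injective (fun x : P => φ (x : stabilizer G v)) := by
    intro x y hxy
    simp only at hxy
    have h1 : φ ((x : stabilizer G v) * (y : stabilizer G v)⁻¹) = 1 := by
      rw [map_mul, map_inv, hxy, mul_inv_cancel]
    have h2 := hker _ (P.mul_mem x.2 (P.inv_mem y.2)) h1
    rw [mul_inv_eq_one] at h2
    exact Subtype.ext h2
  have hnormal_img : ((Subgroup.map φ P).subgroupOf (Subgroup.map φ ⊤)).Normal := by
    constructor
    rintro a ha g
    rw [Subgroup.mem_subgroupOf] at ha ⊢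
    obtain ⟨p, hp, hpa⟩ := ha
    obtain ⟨t, -, hts⟩ := g.2
    refine ⟨t * p * t⁻¹, hPnormal.conj_mem p hp t, ?_⟩
    rw [map_mul, map_mul, map_inv, hpa, hts]
    rfl
  by_cases hPbot : P = ⊥
  · exact Or.inl hPbot
  right
  have hP'ne : P' ≠ ⊥ := by
    intro h
    apply hPbot
    rw [hP'def] at h
    rwa [Subgroup.map_eq_bot_iff_of_injective P (Subgroup.subtype_injective _)] at h
  obtain ⟨a, ha⟩ : (Γ.neighborSet v).Nonempty :=
    Set.nonempty_of_ncard_ne_zero (by rw [hreg v]; omega)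
  have hav : Γ.Adj v a := ha
  -- semiregularity
  have hsemi : ∀ p ∈ P', ∀ x, Γ.Adj v x → p • x = x → p = 1 := by
    intro p hp x hvx hpx
    set Q : Subgroup G := P' ⊓ stabilizer G x with hQ
    have hQr : IsPGroup r Q := hP'r.to_le inf_le_left
    have key := fix_nbrs Γ hr hrd hd hreg hadj h2arc Q hQr v x hvx
      (fun q hq => mem_stabilizer_iff.mp (hP'le hq.1))
      (fun q hq => mem_stabilizer_iff.mp hq.2)
      (fun s hsv hsx q hq => Subgroup.mem_inf.mpr
        ⟨hP'norm s (mem_stabilizer_iff.mpr hsv) q hq.1, by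
          rw [mem_stabilizer_iff, mul_smul, mul_smul]
          have h3 : s⁻¹ • x = x := inv_smul_eq_iff.mpr hsx.symm
          rw [h3, mem_stabilizer_iff.mp hq.2, hsx]⟩)
    have hmem : p ∈ P' ⊓ fixer Γ v :=
      ⟨hp, mem_stabilizer_iff.mp (hP'le hp),
        fun z hz => key z hz p ⟨hp, mem_stabilizer_iff.mpr hpx⟩⟩
    rw [hRbot, Subgroup.mem_bot] at hmem
    exact hmem
  obtain ⟨p₀, hp₀P, hp₀ne⟩ : ∃ p ∈ P', p ≠ (1 : G) := by
    by_contra h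
    push_neg at h
    exact hP'ne ((Subgroup.eq_bot_iff_forall _).mpr h)
  have hb0 : Γ.Adj v (p₀ • a) := by
    have h4 := hadj p₀ hav
    rwa [mem_stabilizer_iff.mp (hP'le hp₀P)] at h4
  have hb0ne : p₀ • a ≠ a := fun h => hp₀ne (hsemi p₀ hp₀P a hav h)
  have htrans : ∀ x, Γ.Adj v x → ∃ p ∈ P', p • a = x := by
    intro x hvx
    by_cases hxa : x = a
    · exact ⟨1, one_mem _, by rw [one_smul, hxa]⟩
    obtain ⟨g, hga, hgv, hgb⟩ := h2arc hav.symm hb0 (fun h => hb0ne h.symm)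
      hav.symm hvx (fun h => hxa h.symm)
    refine ⟨g * p₀ * g⁻¹, hP'norm g (mem_stabilizer_iff.mpr hgv) p₀ hp₀P, ?_⟩
    rw [mul_smul, mul_smul]
    have h5 : g⁻¹ • a = a := inv_smul_eq_iff.mpr hga.symm
    rw [h5, hgb]
  have hcardP' : Nat.card P' = d := by
    have e : ↥P' ≃ ↥(Γ.neighborSet v) := Equiv.ofBijective (fun p => ⟨(p : G) • a, by
        have h6 := hadj (p : G) hav
        rwa [mem_stabilizer_iff.mp (hP'le p.2)] at h6⟩) (by
      constructor
      · intro p q hpq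
        have h7 : (p : G) • a = (q : G) • a := congrArg Subtype.val hpq
        have h8 : ((q : G)⁻¹ * (p : G)) • a = a := by
          rw [mul_smul, h7, inv_smul_smul]
        have h9 := hsemi _ (mul_mem (inv_mem q.2) p.2) a hav h8
        rw [inv_mul_eq_one] at h9
        exact Subtype.ext h9.symm
      · rintro ⟨x, hx⟩
        obtain ⟨p, hpP, hpa⟩ := htrans x hx
        exact ⟨⟨p, hpP⟩, Subtype.ext hpa⟩)
    rw [Nat.card_congr e, Nat.card_coe_set_eq, hreg v]
  obtain ⟨e, hcardeq⟩ : ∃ n, Nat.card P' = r ^ n := IsPGroup.iff_card.mp hP'r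
  have hde : d = r ^ e := by rw [← hcardP', hcardeq]
  have he1 : 1 ≤ e := by
    rcases Nat.eq_zero_or_pos e with h0 | h1
    · rw [h0, pow_zero] at hde; omega
    · exact h1
  -- conjugation transitivity on nontrivial elements
  have hconjtr : ∀ p ∈ P', p ≠ (1 : G) → ∀ q ∈ P', q ≠ (1 : G) →
      ∃ s ∈ stabilizer G v, s * p * s⁻¹ = q := by
    intro p hp hpne q hq hqne
    have hpa : Γ.Adj v (p • a) := by
      have h4 := hadj p hav; rwa [mem_stabilizer_iff.mp (hP'le hp)] at h4
    have hqa : Γ.Adj v (q • a) := by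
      have h4 := hadj q hav; rwa [mem_stabilizer_iff.mp (hP'le hq)] at h4
    have hpane : p • a ≠ a := fun h => hpne (hsemi p hp a hav h)
    have hqane : q • a ≠ a := fun h => hqne (hsemi q hq a hav h)
    obtain ⟨s, hs1, hs2, hs3⟩ := h2arc hpa.symm hav hpane hqa.symm hav hqane
    refine ⟨s, mem_stabilizer_iff.mpr hs2, ?_⟩
    have hsp : s * p * s⁻¹ ∈ P' := hP'norm s (mem_stabilizer_iff.mpr hs2) p hp
    have h5 : (s * p * s⁻¹) • a = q • a := by
      rw [mul_smul, mul_smul]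
      have h6 : s⁻¹ • a = a := inv_smul_eq_iff.mpr hs3.symm
      rw [h6, hs1]
    have h6 : (q⁻¹ * (s * p * s⁻¹)) • a = a := by rw [mul_smul, h5, inv_smul_smul]
    have h7 := hsemi _ (mul_mem (inv_mem hq) hsp) a hav h6
    rw [inv_mul_eq_one] at h7
    exact h7.symm
  -- exponent r
  have hexp : ∀ p ∈ P', p ^ r = 1 := by
    obtain ⟨k, hk⟩ := hP'r ⟨p₀, hp₀P⟩
    have hk' : p₀ ^ (r ^ k) = 1 := by
      have := congrArg (Subtype.val : ↥P' → G) hk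
      simpa using this
    have hdvd : orderOf p₀ ∣ r ^ k := orderOf_dvd_of_pow_eq_one hk'
    obtain ⟨m, hmk, hm⟩ := (Nat.dvd_prime_pow hr).mp hdvd
    have hm1 : m ≠ 0 := by
      intro h0
      rw [h0, pow_zero] at hm
      exact hp₀ne (orderOf_eq_one_iff.mp hm)
    have hzP : p₀ ^ (r ^ (m - 1)) ∈ P' := pow_mem hp₀P _
    have hzr : (p₀ ^ (r ^ (m - 1))) ^ r = 1 := by
      have hmm : r ^ (m - 1) * r = r ^ m := by
        rw [← pow_succ]
        congr 1
        omega
      rw [← pow_mul, hmm, ← hm]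
      exact pow_orderOf_eq_one p₀
    have hzne : p₀ ^ (r ^ (m - 1)) ≠ 1 := by
      intro h1
      have h2 := orderOf_dvd_of_pow_eq_one h1
      rw [hm] at h2
      have h3 := Nat.le_of_dvd (pow_pos hr.pos _) h2
      have h4 := Nat.pow_lt_pow_right hr.one_lt (show m - 1 < m by omega)
      omega
    intro p hp
    by_cases hp1 : p = 1
    · rw [hp1, one_pow]
    obtain ⟨s, hsSt, hs⟩ := hconjtr _ hzP hzne p hp hp1
    rw [← hs, conj_pow, hzr, mul_one, mul_inv_cancel]
  -- commutativity
  have hab : ∀ p ∈ P', ∀ q ∈ P', p * q = q * p := by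
    haveI : Nontrivial ↥P' :=
      nontrivial_of_ne (⟨p₀, hp₀P⟩ : ↥P') 1
        (fun h => hp₀ne (by simpa using congrArg Subtype.val h))
    haveI : Nontrivial (Subgroup.center ↥P') := hP'r.center_nontrivial
    obtain ⟨z', hz'⟩ := exists_ne (1 : Subgroup.center ↥P')
    have hzcP : ((z' : ↥P') : G) ∈ P' := (z' : ↥P').2
    have hzcne : ((z' : ↥P') : G) ≠ 1 := by
      intro h
      exact hz' (Subtype.ext (Subtype.ext h))
    have hzc_comm : ∀ x ∈ P', ((z' : ↥P') : G) * x = x * ((z' : ↥P') : G) := by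
      intro x hx
      have h9 := (Subgroup.mem_center_iff.mp z'.2) ⟨x, hx⟩
      exact (congrArg (Subtype.val : ↥P' → G) h9).symm
    intro p hp q hq
    by_cases hp1 : p = 1
    · rw [hp1, one_mul, mul_one]
    obtain ⟨s, hsSt, hs⟩ := hconjtr _ hzcP hzcne p hp hp1
    have hq' : s⁻¹ * q * s ∈ P' := by
      have h9 := hP'norm s⁻¹ (inv_mem hsSt) q hq
      rwa [inv_inv] at h9
    have hcm := hzc_comm _ hq'
    have h8 : p * q = s * (((z' : ↥P') : G) * (s⁻¹ * q * s)) * s⁻¹ := by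
      rw [← hs]; group
    rw [h8, hcm]
    rw [← hs]; group
  -- assemble the isomorphism
  have hexp' : ∀ x : ↥P', x ^ r = 1 := by
    intro x
    have := hexp (x : G) x.2
    exact Subtype.ext (by simpa using this)
  have hcomm' : ∀ x y : ↥P', x * y = y * x := fun x y =>
    Subtype.ext (hab _ x.2 _ y.2)
  obtain ⟨iso⟩ := iso_of_elem_abelian hr hcardeq hexp' hcomm'
  have isoP : P ≃* ↥P' := Subgroup.equivMapOfInjective P _ (Subgroup.subtype_injective _)
  exact ⟨e, he1, hde, ⟨isoP.trans iso⟩, hinj, hnormal_img⟩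

end Stmt8
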